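/- (One-soliton solution.) For all (x,y,t) ∈ ℝ³, 2 ∂²/∂x² [ log( e^{θ_1(x,y,t)} + e^{θ_2(x,y,t)} ) ] = (1/2)(k_1 − k_2)² · (1 / cosh²( (θ_1(x,y,t) − θ_2(x,y,t))/2 )). -/

import Mathlib

open Real

lemma exp_sum_pos (u v : ℝ) : 0 < Real.exp u + Real.exp v :=
  add_pos (Real.exp_pos u) (Real.exp_pos v)

lemma lin_hasDerivAt (a b : ℝ) (x : ℝ) :
    HasDerivAt (fun x : ℝ => a * x + b) a x := by
  simpa using ((hasDerivAt_id x).const_mul a).add_const b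

lemma first_deriv (a b c d : ℝ) (x : ℝ) :
    HasDerivAt (fun x : ℝ => Real.log (Real.exp (a * x + b) + Real.exp (c * x + d)))
      ((a * Real.exp (a * x + b) + c * Real.exp (c * x + d)) /
        (Real.exp (a * x + b) + Real.exp (c * x + d))) x := by
  have h1 := ((lin_hasDerivAt a b x).exp).add ((lin_hasDerivAt c d x).exp)
  have h2 := h1.log (ne_of_gt (exp_sum_pos _ _))
  convert h2 using 1
  · rfl
  simp only [Pi.add_apply]
  ring

lemma second_deriv (a b c d : ℝ) (x : ℝ) :
    HasDerivAt (fun x : ℝ => (a * Real.exp (a * x + b) + c * Real.exp (c * x + d)) /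
        (Real.exp (a * x + b) + Real.exp (c * x + d)))
      ((a - c) ^ 2 * (Real.exp (a * x + b) * Real.exp (c * x + d)) /
        (Real.exp (a * x + b) + Real.exp (c * x + d)) ^ 2) x := by
  have hN : HasDerivAt (fun x : ℝ => a * Real.exp (a * x + b) + c * Real.exp (c * x + d))
      (a * (Real.exp (a * x + b) * a) + c * (Real.exp (c * x + d) * c)) x :=
    (((lin_hasDerivAt a b x).exp).const_mul a).add (((lin_hasDerivAt c d x).exp).const_mul c)
  have hD : HasDerivAt (fun x : ℝ => Real.exp (a * x + b) + Real.exp (c * x + d))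
      (Real.exp (a * x + b) * a + Real.exp (c * x + d) * c) x :=
    ((lin_hasDerivAt a b x).exp).add ((lin_hasDerivAt c d x).exp)
  have h : HasDerivAt (fun x : ℝ => (a * Real.exp (a * x + b) + c * Real.exp (c * x + d)) /
      (Real.exp (a * x + b) + Real.exp (c * x + d))) _ x :=
    hN.div hD (ne_of_gt (exp_sum_pos _ _))
  convert h using 1
  have hpos := exp_sum_pos (a * x + b) (c * x + d)
  ring

theorem one_soliton_solution
    (k1 k2 θ10 θ20 : ℝ)
    (θ1 θ2 : ℝ → ℝ → ℝ → ℝ)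
    (h1 : ∀ x y t, θ1 x y t = -k1 * x + k1 ^ 2 * y - k1 ^ 3 * t + θ10)
    (h2 : ∀ x y t, θ2 x y t = -k2 * x + k2 ^ 2 * y - k2 ^ 3 * t + θ20) :
    ∀ x y t : ℝ,
      2 * iteratedDeriv 2
          (fun x' => Real.log (Real.exp (θ1 x' y t) + Real.exp (θ2 x' y t))) x
        = (1 / 2) * (k1 - k2) ^ 2 *
            (1 / (Real.cosh ((θ1 x y t - θ2 x y t) / 2)) ^ 2) := by
  intro x y t
  set a := -k1
  set b := k1 ^ 2 * y - k1 ^ 3 * t + θ10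
  set c := -k2
  set d := k2 ^ 2 * y - k2 ^ 3 * t + θ20
  have hθ1 : ∀ x', θ1 x' y t = a * x' + b := by intro x'; rw [h1]; ring
  have hθ2 : ∀ x', θ2 x' y t = c * x' + d := by intro x'; rw [h2]; ring
  have hfun : (fun x' => Real.log (Real.exp (θ1 x' y t) + Real.exp (θ2 x' y t)))
      = fun x' : ℝ => Real.log (Real.exp (a * x' + b) + Real.exp (c * x' + d)) := by
    funext x'; rw [hθ1, hθ2]
  rw [hfun]
  have hd1 : deriv (fun x' : ℝ => Real.log (Real.exp (a * x' + b) + Real.exp (c * x' + d)))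
      = fun x' : ℝ => (a * Real.exp (a * x' + b) + c * Real.exp (c * x' + d)) /
          (Real.exp (a * x' + b) + Real.exp (c * x' + d)) := by
    funext x'; exact (first_deriv a b c d x').deriv
  have hiter : iteratedDeriv 2
      (fun x' : ℝ => Real.log (Real.exp (a * x' + b) + Real.exp (c * x' + d))) x
      = (a - c) ^ 2 * (Real.exp (a * x + b) * Real.exp (c * x + d)) /
        (Real.exp (a * x + b) + Real.exp (c * x + d)) ^ 2 := by
    rw [show (2 : ℕ) = 1 + 1 from rfl, iteratedDeriv_succ, iteratedDeriv_one, hd1]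
    exact (second_deriv a b c d x).deriv
  rw [hiter, hθ1, hθ2]
  have hcosh : Real.cosh ((a * x + b - (c * x + d)) / 2)
      = (Real.exp ((a * x + b - (c * x + d)) / 2)
        + Real.exp (-((a * x + b - (c * x + d)) / 2))) / 2 := Real.cosh_eq _
  rw [hcosh]
  have hE1 : Real.exp ((a * x + b - (c * x + d)) / 2) ^ 2
      = Real.exp (a * x + b) / Real.exp (c * x + d) := by
    rw [← Real.exp_nat_mul, ← Real.exp_sub]; ring_nf
  have hE2 : Real.exp (-((a * x + b - (c * x + d)) / 2)) ^ 2
      = Real.exp (c * x + d) / Real.exp (a * x + b) := by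
    rw [← Real.exp_nat_mul, ← Real.exp_sub]; ring_nf
  have hE3 : Real.exp ((a * x + b - (c * x + d)) / 2) *
      Real.exp (-((a * x + b - (c * x + d)) / 2)) = 1 := by
    rw [← Real.exp_add]; ring_nf; exact Real.exp_zero
  have p1 := Real.exp_pos (a * x + b)
  have p2 := Real.exp_pos (c * x + d)
  have hac : a - c = -(k1 - k2) := by simp [a, c]; ring
  rw [hac]
  have hsq : ((Real.exp ((a * x + b - (c * x + d)) / 2)
        + Real.exp (-((a * x + b - (c * x + d)) / 2))) / 2) ^ 2
      = (Real.exp (a * x + b) + Real.exp (c * x + d)) ^ 2 /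
        (4 * (Real.exp (a * x + b) * Real.exp (c * x + d))) := by
    have : (Real.exp ((a * x + b - (c * x + d)) / 2)
        + Real.exp (-((a * x + b - (c * x + d)) / 2))) ^ 2
      = Real.exp (a * x + b) / Real.exp (c * x + d) + 2
        + Real.exp (c * x + d) / Real.exp (a * x + b) := by
      rw [add_sq, hE1, hE2, mul_assoc, hE3]; ring
    rw [div_pow, this]
    field_simp
    ring
  rw [hsq]
  have hpos := exp_sum_pos (a * x + b) (c * x + d)
  field_simp
  ring
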